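/- arXiv:1511.04922 — 2 statements merged into one kernel-verified Lean document; each statement's English description precedes it below -/
import Mathlib

section
/- If û ∈ o_L((Z))^× satisfies 𝒩(û) = û, then ψ_Col(Δ_LT(û)) = π_L·Δ_LT(û); equivalently, the differential form dû/û = Δ_LT(û)·g_LT dZ is invariant under the operator ψ_{Ω¹}(f·g_LT dZ) := π_L^{-1}·ψ_Col(f)·g_LT dZ. -/
open PowerSeries

/-- Formal derivative of a Laurent series (writing `f = Z^d·P(Z)` with `d = f.order` and
`P = f.powerSeriesPart`, its derivative is `d·Z^{d-1}·P + Z^d·P'`). -/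
noncomputable def lderiv {R : Type*} [CommRing R] (f : LaurentSeries R) : LaurentSeries R :=
  HahnSeries.single (f.order - 1) ((f.order : R)) *
      HahnSeries.ofPowerSeries ℤ R f.powerSeriesPart
    + HahnSeries.single f.order 1 *
      HahnSeries.ofPowerSeries ℤ R (PowerSeries.derivativeFun f.powerSeriesPart)

/-- The logarithmic derivative `Δ_LT(f) = g_LT⁻¹·f'/f` on the Laurent series ring `o_L((Z))`,
where `g_LT ∈ o_L[[Z]]ˣ` is the unit attached to the invariant differential form
(`Ring.inverse f = 0` for non-units `f`). -/
noncomputable def DeltaLTLaurent {O : Type*} [CommRing O] (g : (PowerSeries O)ˣ)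
    (f : LaurentSeries O) : LaurentSeries O :=
  HahnSeries.ofPowerSeries ℤ O (↑g⁻¹ : PowerSeries O) * lderiv f * Ring.inverse f

namespace Stmt15Aux

variable {R : Type*} [CommRing R]

lemma deriv_X : derivativeFun (X : PowerSeries R) = 1 := by
  ext n
  rw [show (X : PowerSeries R).derivativeFun = d⁄dX R X from rfl, coeff_derivative, coeff_X, coeff_one]
  rcases n with _ | n <;> simp

lemma mul_deriv_pow (f : PowerSeries R) (j : ℕ) :
    f * derivativeFun (f ^ j) = C (j : R) * f ^ j * derivativeFun f := by
  induction j with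
  | zero => simp [derivativeFun_one]
  | succ j ih =>
      rw [pow_succ, derivativeFun_mul, smul_eq_mul, smul_eq_mul]
      have hC : C ((j + 1 : ℕ) : R) = C (j : R) + 1 := by
        push_cast
        rw [map_add, map_one]
      rw [hC]
      linear_combination f * ih

lemma deriv_prod {ι : Type*} [DecidableEq ι] (s : Finset ι) (F : ι → PowerSeries R) :
    derivativeFun (∏ a ∈ s, F a) =
      ∑ a ∈ s, derivativeFun (F a) * ∏ b ∈ s.erase a, F b := by
  induction s using Finset.induction_on with
  | empty => simp [derivativeFun_one]
  | insert _ _ ha =>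
      rename_i a s ih
      rw [Finset.prod_insert ha, derivativeFun_mul, smul_eq_mul, smul_eq_mul, ih,
        Finset.sum_insert ha, Finset.erase_insert ha, Finset.mul_sum]
      rw [add_comm]
      congr 1
      · exact mul_comm _ _
      · refine Finset.sum_congr rfl fun b hb => ?_
        have hba : b ≠ a := fun h => ha (h ▸ hb)
        rw [Finset.erase_insert_of_ne hba.symm,
          Finset.prod_insert (fun h => ha (Finset.mem_of_mem_erase h))]
        ring

lemma map_derivativeFun {S : Type*} [CommRing S] (f : R →+* S) (p : PowerSeries R) :
    derivativeFun (PowerSeries.map f p) = PowerSeries.map f (derivativeFun p) := by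
  ext n
  show coeff n (d⁄dX S (PowerSeries.map f p)) = coeff n (PowerSeries.map f (d⁄dX R p))
  simp [coeff_derivative, coeff_map]

lemma map_inj {S : Type*} [CommRing S] {f : R →+* S} (hf : Function.Injective f) :
    Function.Injective (PowerSeries.map f) := fun p q h => by
  ext n
  exact hf (by simpa [coeff_map] using congrArg (coeff n) h)

lemma ring_inverse_eq {a b : R} (h : a * b = 1) : Ring.inverse a = b := by
  have ha : IsUnit a := IsUnit.of_mul_eq_one b h
  calc Ring.inverse a = Ring.inverse a * (a * b) := by rw [h, mul_one]
    _ = (Ring.inverse a * a) * b := by ring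
    _ = b := by rw [Ring.inverse_mul_cancel a ha, one_mul]

lemma sm (a b : ℤ) (x y : PowerSeries R) :
    (HahnSeries.single a 1 * HahnSeries.ofPowerSeries ℤ R x) *
      (HahnSeries.single b 1 * HahnSeries.ofPowerSeries ℤ R y) =
    HahnSeries.single (a + b) 1 * HahnSeries.ofPowerSeries ℤ R (x * y) := by
  rw [mul_mul_mul_comm, HahnSeries.single_mul_single, one_mul, map_mul]

lemma single_eq (a : ℤ) (r : R) :
    (HahnSeries.single a r : LaurentSeries R) =
      HahnSeries.single a 1 * HahnSeries.ofPowerSeries ℤ R (C r) := by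
  rw [HahnSeries.ofPowerSeries_C, HahnSeries.C_apply, HahnSeries.single_mul_single,
    add_zero, one_mul]

end Stmt15Aux

/-- Context as in Statements 0 and 1 (Lubin-Tate series `Xπ = [π_L](Z)` over `O = o_L`, Frobenius
substitution `φ`, torsion points `LT1 ⊆ Obar`, substitutions `σ a : f(Z) ↦ f(a +_LT Z)`, the
trace operator `ψCol` and norm operator `𝒩` on `o_L[[Z]]`, and the invariant-differential unit
`g = g_LT`).  `ψL` and `NL` denote the extensions of `ψ_Col` and `𝒩` to the Laurent series ring
`o_L((Z)) = o_L[[Z]][Z⁻¹]`, determined by `ψ_Col(f) = Z^{-n}·ψ_Col([π_L](Z)^n·f)` and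
`𝒩(f) = Z^{-qn}·𝒩([π_L](Z)^n·f)` whenever `[π_L](Z)^n·f ∈ o_L[[Z]]`.

Conclusion: if `û ∈ o_L((Z))ˣ` satisfies `𝒩(û) = û`, then `ψ_Col(Δ_LT(û)) = π_L·Δ_LT(û)`;
equivalently, the differential form `dû/û = Δ_LT(û)·g_LT dZ` is invariant under the operator
`ψ_{Ω¹}(f·g_LT dZ) = π_L⁻¹·ψ_Col(f)·g_LT dZ`. -/

theorem statement15_psi_invariance_of_dlog
    (O : Type*) [CommRing O] [IsDomain O] [IsDiscreteValuationRing O]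
    (π : O) (hπ : Irreducible π) [IsAdicComplete (Ideal.span {π}) O]
    (q : ℕ) (hq1 : 1 < q) (hq : Nat.card (O ⧸ Ideal.span {π}) = q)
    (Xπ : PowerSeries O)
    (hXπ0 : constantCoeff Xπ = 0)
    (hXπ1 : coeff 1 Xπ = π)
    (hXπq : ∃ gq : PowerSeries O, Xπ = X ^ q + C π * gq)
    (φ : PowerSeries O →+* PowerSeries O)
    (hφ : ∀ f k, coeff k (φ f) = ∑ n ∈ Finset.range (k + 1), coeff n f * coeff k (Xπ ^ n))
    (hφinj : Function.Injective φ)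
    (Obar : Type*) [CommRing Obar] [IsDomain Obar] [Algebra O Obar]
    (hObar : Function.Injective (algebraMap O Obar))
    (LT1 : Finset Obar) (hLT1 : LT1.card = q)
    (σ : Obar → (PowerSeries O →+* PowerSeries Obar))
    (hσC : ∀ a ∈ LT1, ∀ r : O, σ a (C r) = C (algebraMap O Obar r))
    (hσ0 : ∀ a ∈ LT1, constantCoeff (σ a X) = a)
    (hσφ : ∀ a ∈ LT1, ∀ f, σ a (φ f) = PowerSeries.map (algebraMap O Obar) (φ f))
    (ψCol : PowerSeries O →ₗ[O] PowerSeries O)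
    (hψ : ∀ f, PowerSeries.map (algebraMap O Obar) (φ (ψCol f)) = ∑ a ∈ LT1, σ a f)
    (𝒩 : PowerSeries O →* PowerSeries O)
    (h𝒩 : ∀ f, PowerSeries.map (algebraMap O Obar) (φ (𝒩 f)) = ∏ a ∈ LT1, σ a f)
    (g : (PowerSeries O)ˣ)
    (hg1 : constantCoeff (↑g : PowerSeries O) = 1)
    (hgφ : C π * (↑g : PowerSeries O) = PowerSeries.derivativeFun Xπ * φ ↑g)
    (hchainφ : ∀ f, PowerSeries.derivativeFun (φ f) =
      φ (PowerSeries.derivativeFun f) * PowerSeries.derivativeFun Xπ)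
    (hchainσ : ∀ a ∈ LT1, ∀ f, PowerSeries.derivativeFun (σ a f) =
      σ a (PowerSeries.derivativeFun f) * PowerSeries.derivativeFun (σ a X))
    (hinvσ : ∀ a ∈ LT1, σ a (↑g : PowerSeries O) * PowerSeries.derivativeFun (σ a X) =
      PowerSeries.map (algebraMap O Obar) ↑g)
    -- the extension of `ψ_Col` to `o_L((Z))`
    (ψL : LaurentSeries O →ₗ[O] LaurentSeries O)
    (hψL : ∀ (f : LaurentSeries O) (n : ℕ) (h : PowerSeries O),
      (HahnSeries.ofPowerSeries ℤ O Xπ) ^ n * f = HahnSeries.ofPowerSeries ℤ O h →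
      ψL f = HahnSeries.single (-(n : ℤ)) 1 * HahnSeries.ofPowerSeries ℤ O (ψCol h))
    -- the (multiplicative) extension of `𝒩` to `o_L((Z))`
    (NL : LaurentSeries O → LaurentSeries O)
    (hNLmul : ∀ f₁ f₂, NL (f₁ * f₂) = NL f₁ * NL f₂)
    (hNL : ∀ (f : LaurentSeries O) (n : ℕ) (h : PowerSeries O),
      (HahnSeries.ofPowerSeries ℤ O Xπ) ^ n * f = HahnSeries.ofPowerSeries ℤ O h →
      NL f = HahnSeries.single (-(q * n : ℕ) : ℤ) 1 * HahnSeries.ofPowerSeries ℤ O (𝒩 h)) :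
    ∀ u : LaurentSeries O, IsUnit u → NL u = u →
      ψL (DeltaLTLaurent g u) = HahnSeries.C π * DeltaLTLaurent g u := by
  classical
  intro u hu hNu
  set mapA := PowerSeries.map (algebraMap O Obar) with hmapA
  -- basic nonvanishing facts
  have hπbar : algebraMap O Obar π ≠ 0 := fun h0 => hπ.ne_zero (hObar (by rw [h0, map_zero]))
  have hXπne : Xπ ≠ 0 := fun h0 => hπ.ne_zero (by rw [← hXπ1, h0, map_zero])
  have hu0 : u ≠ 0 := hu.ne_zero
  -- φ fixes constants and sends X to Xπ
  have hφC : ∀ c : O, φ (C c) = C c := by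
    intro c; ext j
    rw [hφ, Finset.sum_eq_single 0]
    · simp [PowerSeries.coeff_C, PowerSeries.coeff_one]
    · intro i _ hi0; rw [PowerSeries.coeff_C, if_neg hi0, zero_mul]
    · intro hmem; exact absurd (Finset.mem_range.mpr (Nat.succ_pos j)) hmem
  have hφX : φ X = Xπ := by
    ext j
    rw [hφ]
    rcases Nat.eq_zero_or_pos j with hj | hj
    · subst hj
      rw [Finset.sum_range_one, pow_zero,
        show (coeff 0) (X : PowerSeries O) = 0 by simp [PowerSeries.coeff_X], zero_mul,
        PowerSeries.coeff_zero_eq_constantCoeff_apply, hXπ0]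
    · rw [Finset.sum_eq_single 1]
      · simp
      · intro i _ hi1; rw [PowerSeries.coeff_X, if_neg hi1, zero_mul]
      · intro hmem; exact absurd (Finset.mem_range.mpr (by omega)) hmem
  -- the inverse unit of g
  set gi : PowerSeries O := (↑g⁻¹ : PowerSeries O) with hgi
  have hggi : (↑g : PowerSeries O) * gi = 1 := g.mul_inv
  -- decomposition of u
  set d : ℤ := u.order with hd
  set P : PowerSeries O := u.powerSeriesPart with hP
  have hrep : HahnSeries.single d 1 * HahnSeries.ofPowerSeries ℤ O P = u := by
    have h1 := u.single_order_mul_powerSeriesPart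
    rw [hd, hP]; exact h1
  -- P is a unit
  obtain ⟨v, hv⟩ := hu.exists_right_inv
  have hv0 : v ≠ 0 := by
    intro hv0; rw [hv0, mul_zero] at hv; simp at hv
  have hord : d + v.order = 0 := by
    have h1 := HahnSeries.order_mul hu0 hv0
    rw [hv, HahnSeries.order_one] at h1
    rw [hd]; exact h1.symm
  have hlc : u.leadingCoeff * v.leadingCoeff = 1 := by
    have h2 := HahnSeries.coeff_mul_order_add_order u v
    rw [hv, ← hd, hord] at h2
    simpa [HahnSeries.coeff_one] using h2.symm
  have hlcu : u.leadingCoeff = u.coeff d := by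
    simp only [HahnSeries.leadingCoeff_eq, hd]
  have hlcP : constantCoeff P = u.coeff d := by
    have h3 := u.powerSeriesPart_coeff 0
    rw [Nat.cast_zero, add_zero] at h3
    rw [hP, ← PowerSeries.coeff_zero_eq_constantCoeff_apply, h3, hd]
  have hPunit : IsUnit P := by
    rw [PowerSeries.isUnit_iff_constantCoeff, hlcP, ← hlcu]
    exact IsUnit.of_mul_eq_one _ hlc
  obtain ⟨Q, hPQ⟩ := hPunit.exists_right_inv
  -- Xπ = X * E
  obtain ⟨E, hE⟩ : ∃ E, Xπ = X * E := PowerSeries.X_dvd_iff.mpr hXπ0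
  -- integers
  set n : ℕ := d.natAbs with hn
  have hnd : 0 ≤ (n : ℤ) + d := by rw [hn]; omega
  set k : ℕ := ((n : ℤ) + d).toNat with hkdef
  have hk : (k : ℤ) = (n : ℤ) + d := Int.toNat_of_nonneg hnd
  have hqnn : (n : ℤ) ≤ ((q * n : ℕ) : ℤ) := by
    have : n ≤ q * n := Nat.le_mul_of_pos_left n (by omega)
    exact_mod_cast this
  have hmd : 0 ≤ ((q * n : ℕ) : ℤ) + d := by omega
  set m : ℕ := (((q * n : ℕ) : ℤ) + d).toNat with hmdef
  have hm : (m : ℤ) = ((q * n : ℕ) : ℤ) + d := Int.toNat_of_nonneg hmd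
  -- main power series actors
  set W : PowerSeries O := gi * (C (d : O) * P + X * derivativeFun P) * Q with hW
  set h : PowerSeries O := X ^ k * E ^ n * P with hh
  -- Ring.inverse u
  have hinvu : Ring.inverse u = HahnSeries.single (-d) 1 * HahnSeries.ofPowerSeries ℤ O Q := by
    apply Stmt15Aux.ring_inverse_eq
    rw [← hrep, Stmt15Aux.sm, hPQ, add_neg_cancel, HahnSeries.single_zero_one, one_mul, map_one]
  -- lderiv u
  have hldu : lderiv u = HahnSeries.single (d - 1) 1 *
      HahnSeries.ofPowerSeries ℤ O (C (d : O) * P + X * derivativeFun P) := by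
    unfold lderiv
    rw [← hd, ← hP, map_add, mul_add]
    congr 1
    · rw [Stmt15Aux.single_eq, mul_assoc, ← map_mul]
    · rw [map_mul, HahnSeries.ofPowerSeries_X, ← mul_assoc, HahnSeries.single_mul_single,
        mul_one, sub_add_cancel]
  have hΔ : DeltaLTLaurent g u = HahnSeries.single (-1 : ℤ) 1 *
      HahnSeries.ofPowerSeries ℤ O W := by
    unfold DeltaLTLaurent
    rw [← hgi, hldu, hinvu]
    calc HahnSeries.ofPowerSeries ℤ O gi *
          (HahnSeries.single (d - 1) 1 *
            HahnSeries.ofPowerSeries ℤ O (C (d : O) * P + X * derivativeFun P)) *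
          (HahnSeries.single (-d) 1 * HahnSeries.ofPowerSeries ℤ O Q)
        = (HahnSeries.single (0 : ℤ) 1 * HahnSeries.ofPowerSeries ℤ O gi) *
          (HahnSeries.single (d - 1) 1 *
            HahnSeries.ofPowerSeries ℤ O (C (d : O) * P + X * derivativeFun P)) *
          (HahnSeries.single (-d) 1 * HahnSeries.ofPowerSeries ℤ O Q) := by
          rw [HahnSeries.single_zero_one, one_mul]
      _ = HahnSeries.single ((0 + (d - 1)) + -d) 1 *
          HahnSeries.ofPowerSeries ℤ O (gi * (C (d : O) * P + X * derivativeFun P) * Q) := by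
          rw [Stmt15Aux.sm, Stmt15Aux.sm]
      _ = HahnSeries.single (-1 : ℤ) 1 * HahnSeries.ofPowerSeries ℤ O W := by
          rw [hW, show (0 + (d - 1)) + -d = (-1 : ℤ) by ring]
  -- Xπ^n * u is the power series h
  have hXu : (HahnSeries.ofPowerSeries ℤ O Xπ) ^ n * u = HahnSeries.ofPowerSeries ℤ O h := by
    calc (HahnSeries.ofPowerSeries ℤ O Xπ) ^ n * u
        = (HahnSeries.single (n : ℤ) 1 * HahnSeries.ofPowerSeries ℤ O (E ^ n)) *
          (HahnSeries.single d 1 * HahnSeries.ofPowerSeries ℤ O P) := by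
          rw [← hrep, hE, map_mul, HahnSeries.ofPowerSeries_X, mul_pow, HahnSeries.single_pow,
            one_pow, nsmul_eq_mul, mul_one, map_pow]
      _ = HahnSeries.single ((n : ℤ) + d) 1 * HahnSeries.ofPowerSeries ℤ O (E ^ n * P) :=
          Stmt15Aux.sm _ _ _ _
      _ = HahnSeries.ofPowerSeries ℤ O h := by
          simp only [hh, map_mul, HahnSeries.ofPowerSeries_X_pow, hk]
          ring
  -- the norm equation
  have hNh : 𝒩 h = X ^ m * P := by
    have h1 := hNL u n h hXu
    rw [hNu] at h1
    have h2 : HahnSeries.single ((q * n : ℕ) : ℤ) 1 * u = HahnSeries.ofPowerSeries ℤ O (𝒩 h) := by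
      rw [h1, ← mul_assoc, HahnSeries.single_mul_single, one_mul,
        show ((q * n : ℕ) : ℤ) + (-(q * n : ℕ) : ℤ) = 0 by ring, HahnSeries.single_zero_one,
        one_mul]
    apply HahnSeries.ofPowerSeries_injective (Γ := ℤ) (R := O)
    rw [← h2, ← hrep, ← mul_assoc, HahnSeries.single_mul_single, one_mul, map_mul,
      HahnSeries.ofPowerSeries_X_pow, hm]
  -- derivative facts
  have hdXπ : derivativeFun Xπ = E + X * derivativeFun E := by
    rw [hE, derivativeFun_mul, smul_eq_mul, smul_eq_mul, Stmt15Aux.deriv_X, mul_one]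
    ring
  have dh : derivativeFun h = derivativeFun (X ^ k) * (E ^ n * P)
      + X ^ k * (derivativeFun (E ^ n) * P + E ^ n * derivativeFun P) := by
    rw [hh, show X ^ k * E ^ n * P = X ^ k * (E ^ n * P) from mul_assoc _ _ _,
      derivativeFun_mul, derivativeFun_mul, smul_eq_mul, smul_eq_mul, smul_eq_mul, smul_eq_mul]
    ring
  have ha : X * derivativeFun ((X : PowerSeries O) ^ k) = C ((k : ℕ) : O) * X ^ k := by
    have h4 := Stmt15Aux.mul_deriv_pow (X : PowerSeries O) k
    rwa [Stmt15Aux.deriv_X, mul_one] at h4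
  have hb : E * derivativeFun (E ^ n) = C ((n : ℕ) : O) * E ^ n * derivativeFun E :=
    Stmt15Aux.mul_deriv_pow E n
  have hCk : C ((k : ℕ) : O) = C ((n : ℕ) : O) + C ((d : ℤ) : O) := by
    have h5 : ((k : ℕ) : O) = ((n : ℕ) : O) + ((d : ℤ) : O) := by
      have h6 : (((k : ℕ) : ℤ) : O) = ((((n : ℤ) + d) : ℤ) : O) := by rw [hk]
      push_cast at h6
      exact h6
    rw [h5, map_add]
  have hCm : C ((m : ℕ) : O) = C (((q * n : ℕ)) : O) + C ((d : ℤ) : O) := by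
    have h5 : ((m : ℕ) : O) = (((q * n : ℕ)) : O) + ((d : ℤ) : O) := by
      have h6 : (((m : ℕ) : ℤ) : O) = (((((q * n : ℕ) : ℤ) + d) : ℤ) : O) := by rw [hm]
      push_cast at h6 ⊢
      exact h6
    rw [h5, map_add]
  -- key identity (†)
  have key1 : (↑g : PowerSeries O) * E * W * h + C ((n : ℕ) : O) * derivativeFun Xπ * h
      = Xπ * derivativeFun h := by
    apply mul_left_cancel₀ hXπne
    rw [dh, hdXπ, hW, hh, hE]
    linear_combination
      ((P * Q) * (X ^ (k + 1) * E ^ (n + 2)) * (C (d : O) * P + X * derivativeFun P)) * hggi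
      + ((X ^ (k + 1) * E ^ (n + 2)) * (C (d : O) * P + X * derivativeFun P)) * hPQ
      - (X * E ^ 2 * E ^ n * P) * ha
      - (X ^ (k + 2) * E * P) * hb
      - ((X ^ (k + 1) * E ^ (n + 2)) * P) * hCk
  -- key identity on the φ side
  set t : PowerSeries O := φ (X ^ m * P) with htdef
  have ht : t = Xπ ^ m * φ P := by rw [htdef, map_mul, map_pow, hφX]
  have dt : derivativeFun t = derivativeFun (Xπ ^ m) * φ P
      + Xπ ^ m * (φ (derivativeFun P) * derivativeFun Xπ) := by
    rw [ht, derivativeFun_mul, smul_eq_mul, smul_eq_mul, hchainφ P]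
    ring
  have hφCW : φ (C π * W) = C π * φ W := by rw [map_mul, hφC]
  have hφW : φ W = φ gi * (C (d : O) * φ P + Xπ * φ (derivativeFun P)) * φ Q := by
    rw [hW]
    simp only [map_mul, map_add]
    rw [hφC, hφX]
  have ha2 : Xπ * derivativeFun (Xπ ^ m) = C ((m : ℕ) : O) * Xπ ^ m * derivativeFun Xπ :=
    Stmt15Aux.mul_deriv_pow Xπ m
  have R6 : C π * (↑g : PowerSeries O) * φ gi = derivativeFun Xπ := by
    calc C π * (↑g : PowerSeries O) * φ gi
        = (derivativeFun Xπ * φ ↑g) * φ gi := by rw [hgφ]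
      _ = derivativeFun Xπ * φ ((↑g : PowerSeries O) * gi) := by rw [map_mul]; ring
      _ = derivativeFun Xπ := by rw [hggi, map_one, mul_one]
  have R7 : φ P * φ Q = 1 := by rw [← map_mul, hPQ, map_one]
  have key2 : (↑g : PowerSeries O) * t * φ (C π * W)
      + C (((q * n : ℕ)) : O) * derivativeFun Xπ * t = Xπ * derivativeFun t := by
    apply mul_left_cancel₀ hXπne
    rw [hφCW, dt, hφW, ht]
    linear_combination
      (Xπ ^ (m + 1) * φ P * φ Q * (C (d : O) * φ P + Xπ * φ (derivativeFun P))) * R6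
      + (derivativeFun Xπ * Xπ ^ (m + 1) * (C (d : O) * φ P + Xπ * φ (derivativeFun P))) * R7
      - (Xπ * φ P) * ha2
      - (Xπ ^ (m + 1) * derivativeFun Xπ * φ P) * hCm
  -- the product of the σ-conjugates of h
  set S : PowerSeries Obar := ∏ a ∈ LT1, σ a h with hSdef
  have hσXπ : ∀ a ∈ LT1, σ a Xπ = mapA Xπ := by
    intro a ha_
    rw [← hφX]
    exact hσφ a ha_ X
  have hσdXπ : ∀ a ∈ LT1, σ a (derivativeFun Xπ) * derivativeFun (σ a X)
      = mapA (derivativeFun Xπ) := by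
    intro a ha_
    have h1 := hchainσ a ha_ Xπ
    rw [hσXπ a ha_, Stmt15Aux.map_derivativeFun] at h1
    exact h1.symm
  have hper : ∀ a ∈ LT1, mapA ↑g * σ a (E * W) * S
      + C (algebraMap O Obar ((n : ℕ) : O)) * mapA (derivativeFun Xπ) * S
      = mapA Xπ * (derivativeFun (σ a h) * ∏ b ∈ LT1.erase a, σ b h) := by
    intro a ha_
    have hK1 := congrArg (σ a) key1
    simp only [map_add, map_mul] at hK1
    rw [hσC a ha_] at hK1
    have hK6 : σ a h * ∏ b ∈ LT1.erase a, σ b h = S := by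
      rw [hSdef]; exact Finset.mul_prod_erase LT1 (fun b => σ b h) ha_
    calc mapA ↑g * σ a (E * W) * S
          + C (algebraMap O Obar ((n : ℕ) : O)) * mapA (derivativeFun Xπ) * S
        = (σ a ↑g * derivativeFun (σ a X)) * σ a (E * W)
            * (σ a h * ∏ b ∈ LT1.erase a, σ b h)
          + C (algebraMap O Obar ((n : ℕ) : O))
            * (σ a (derivativeFun Xπ) * derivativeFun (σ a X))
            * (σ a h * ∏ b ∈ LT1.erase a, σ b h) := by
          rw [hinvσ a ha_, hσdXπ a ha_, hK6]
      _ = ((σ a ↑g * σ a E * σ a W * σ a h)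
            + C (algebraMap O Obar ((n : ℕ) : O)) * σ a (derivativeFun Xπ) * σ a h)
          * (derivativeFun (σ a X) * ∏ b ∈ LT1.erase a, σ b h) := by
          rw [map_mul (σ a)]; ring
      _ = (σ a Xπ * σ a (derivativeFun h))
          * (derivativeFun (σ a X) * ∏ b ∈ LT1.erase a, σ b h) := by rw [hK1]
      _ = mapA Xπ * ((σ a (derivativeFun h) * derivativeFun (σ a X))
            * ∏ b ∈ LT1.erase a, σ b h) := by rw [hσXπ a ha_]; ring
      _ = mapA Xπ * (derivativeFun (σ a h) * ∏ b ∈ LT1.erase a, σ b h) := by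
          rw [← hchainσ a ha_ h]
  have sumA : mapA ↑g * (∑ a ∈ LT1, σ a (E * W)) * S
      + C (algebraMap O Obar (((q * n : ℕ)) : O)) * mapA (derivativeFun Xπ) * S
      = mapA Xπ * derivativeFun S := by
    have h1 : ∑ a ∈ LT1, (mapA ↑g * σ a (E * W) * S
        + C (algebraMap O Obar ((n : ℕ) : O)) * mapA (derivativeFun Xπ) * S)
        = mapA Xπ * derivativeFun S := by
      calc ∑ a ∈ LT1, (mapA ↑g * σ a (E * W) * S
            + C (algebraMap O Obar ((n : ℕ) : O)) * mapA (derivativeFun Xπ) * S)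
          = ∑ a ∈ LT1, mapA Xπ * (derivativeFun (σ a h) * ∏ b ∈ LT1.erase a, σ b h) :=
            Finset.sum_congr rfl hper
        _ = mapA Xπ * ∑ a ∈ LT1, derivativeFun (σ a h) * ∏ b ∈ LT1.erase a, σ b h := by
            rw [Finset.mul_sum]
        _ = mapA Xπ * derivativeFun S := by rw [hSdef, Stmt15Aux.deriv_prod]
    rw [Finset.sum_add_distrib, ← Finset.sum_mul, ← Finset.mul_sum, Finset.sum_const, hLT1,
      nsmul_eq_mul] at h1
    have hq' : C (algebraMap O Obar (((q * n : ℕ)) : O))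
        = (q : PowerSeries Obar) * C (algebraMap O Obar ((n : ℕ) : O)) := by
      have h7 : (((q * n : ℕ)) : O) = (q : O) * ((n : ℕ) : O) := by push_cast; ring
      rw [h7, map_mul, map_mul, map_natCast, map_natCast]
    rw [hq']
    linear_combination h1
  -- identify S with the image of t
  have hStS : S = mapA t := by
    rw [hSdef, ← h𝒩 h, hNh, ← htdef]
  have key2' : mapA ↑g * S * mapA (φ (C π * W))
      + C (algebraMap O Obar (((q * n : ℕ)) : O)) * mapA (derivativeFun Xπ) * S
      = mapA Xπ * derivativeFun S := by
    have hK2 := congrArg mapA key2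
    generalize hgen : φ (C π * W) = y at hK2 ⊢
    simp only [map_add, map_mul, PowerSeries.map_C] at hK2
    rw [show mapA (derivativeFun t) = derivativeFun (mapA t) from
      (Stmt15Aux.map_derivativeFun _ t).symm, ← hStS,
      show mapA (C (((q * n : ℕ)) : O)) = C (algebraMap O Obar (((q * n : ℕ)) : O)) by
        rw [hmapA, PowerSeries.map_C]] at hK2
    exact hK2
  have hEE : mapA ↑g * (∑ a ∈ LT1, σ a (E * W)) * S = mapA ↑g * S * mapA (φ (C π * W)) := by
    have h8 := sumA.trans key2'.symm
    exact add_right_cancel h8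
  rw [← hψ (E * W)] at hEE
  -- nonvanishing of mapA g * S
  have hmXπ : mapA Xπ ≠ 0 := by
    intro h0
    apply hπbar
    have h9 := congrArg (coeff 1) h0
    rw [PowerSeries.coeff_map, hXπ1] at h9
    simpa using h9
  have hφPne : mapA (φ P) ≠ 0 := ((hPunit.map φ).map mapA).ne_zero
  have hSne : S ≠ 0 := by
    rw [hStS, ht, map_mul, map_pow]
    exact mul_ne_zero (pow_ne_zero _ hmXπ) hφPne
  have hgSne : mapA ↑g * S ≠ 0 := mul_ne_zero ((g.isUnit.map mapA).ne_zero) hSne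
  -- the core identity
  have hcore : ψCol (E * W) = C π * W := by
    apply hφinj
    apply Stmt15Aux.map_inj hObar
    apply mul_left_cancel₀ hgSne
    calc (mapA ↑g * S) * mapA (φ (ψCol (E * W)))
        = mapA ↑g * mapA (φ (ψCol (E * W))) * S := by ring
      _ = mapA ↑g * S * mapA (φ (C π * W)) := hEE
  -- conclude on the Laurent series level
  have hXΔ : (HahnSeries.ofPowerSeries ℤ O Xπ) ^ 1 * DeltaLTLaurent g u
      = HahnSeries.ofPowerSeries ℤ O (E * W) := by
    rw [pow_one, hΔ, hE, map_mul, HahnSeries.ofPowerSeries_X, Stmt15Aux.sm,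
      show (1 : ℤ) + (-1 : ℤ) = 0 by ring, HahnSeries.single_zero_one, one_mul]
  rw [hψL (DeltaLTLaurent g u) 1 (E * W) hXΔ, hcore, map_mul, HahnSeries.ofPowerSeries_C, hΔ,
    show (-(1 : ℕ) : ℤ) = (-1 : ℤ) by norm_num]
  ring
end

section
/- Let M_0 →^α M →^β M_1 be a sequence of Hausdorff locally compact linear-topological o_L-modules and continuous o_L-linear maps such that im(α) = ker(β) and β is topologically strict with closed image. Then the dual sequence M_1^∨ →^{β^∨} M^∨ →^{α^∨} M_0^∨ is exact, i.e. im(β^∨) = ker(α^∨), where (−)^∨ := Hom_{o_L}^c(−, L/o_L) with the compact-open topology and β^∨(F) := F ∘ β, α^∨(F) := F ∘ α. -/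
set_option synthInstance.maxHeartbeats 1000000
set_option maxHeartbeats 1000000

/-- The submodule of `C(M, Q)` consisting of the (continuous) `S`-linear maps; its
underlying type, with the subspace topology of the compact-open topology on `C(M, Q)`,
is `Hom_S^c(M, Q)`. -/
def continuousLinearSubmodule (S M Q : Type*) [CommSemiring S]
    [TopologicalSpace M] [AddCommMonoid M] [Module S M]
    [TopologicalSpace Q] [AddCommMonoid Q] [Module S Q]
    [ContinuousAdd Q] [ContinuousConstSMul S Q] : Submodule S C(M, Q) where
  carrier := {f | IsLinearMap S f}
  add_mem' := fun {f g} hf hg => by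
    constructor
    · intro x y
      simp only [ContinuousMap.add_apply]
      rw [hf.map_add, hg.map_add]
      abel
    · intro c x
      simp only [ContinuousMap.add_apply]
      rw [hf.map_smul, hg.map_smul, smul_add]
  zero_mem' := by
    constructor
    · intro x y; simp
    · intro c x; simp
  smul_mem' := fun c f hf => by
    constructor
    · intro x y
      simp only [ContinuousMap.smul_apply]
      rw [hf.map_add, smul_add]
    · intro a x
      simp only [ContinuousMap.smul_apply]
      rw [hf.map_smul, smul_comm]


/-- Factor a linear map through a surjection whose kernel it annihilates. -/
theorem auxFactorThroughSurjective {R P N Q : Type*} [CommRing R]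
    [AddCommGroup P] [Module R P] [AddCommGroup N] [Module R N]
    [AddCommGroup Q] [Module R Q]
    (ψ : P →ₗ[R] N) (hsurj : Function.Surjective ψ) (φ : P →ₗ[R] Q)
    (hker : LinearMap.ker ψ ≤ LinearMap.ker φ) :
    ∃ g : N →ₗ[R] Q, ∀ z : P, g (ψ z) = φ z := by
  classical
  choose sec hsec using hsurj
  have key : ∀ {x y : P}, ψ x = ψ y → φ x = φ y := by
    intro x y h
    have hx : x - y ∈ LinearMap.ker ψ := by
      rw [LinearMap.mem_ker, map_sub, h, sub_self]
    have := hker hx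
    rwa [LinearMap.mem_ker, map_sub, sub_eq_zero] at this
  refine ⟨{ toFun := fun n => φ (sec n)
            map_add' := fun a b => ?_
            map_smul' := fun r a => ?_ }, fun z => ?_⟩
  · rw [← map_add φ]
    exact key (by rw [map_add, hsec, hsec, hsec])
  · rw [RingHom.id_apply, ← map_smul φ]
    exact key (by rw [map_smul, hsec, hsec])
  · exact key (hsec (ψ z))

/-- Baer's criterion for `K ⧸ R` over a Dedekind domain `R` with fraction field `K`. -/
theorem auxBaerQuotient {R K : Type*} [CommRing R] [IsDedekindDomain R] [Field K]
    [Algebra R K] [IsFractionRing R K] :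
    Module.Baer R (K ⧸ (LinearMap.range (Algebra.linearMap R K))) := by
  set O : Submodule R K := LinearMap.range (Algebra.linearMap R K) with hO
  intro I f
  by_cases hI : I = ⊥
  · refine ⟨0, fun x mem => ?_⟩
    have hx0 : x = 0 := by simpa [hI] using mem
    subst hx0
    have h0 : (⟨0, mem⟩ : ↥I) = 0 := by apply Subtype.ext; rfl
    rw [h0, map_zero, map_zero]
  · have hJ : (I : FractionalIdeal (nonZeroDivisors R) K) ≠ 0 := by
      rwa [ne_eq, FractionalIdeal.coeIdeal_eq_zero]
    have hmul := mul_inv_cancel₀ hJ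
    have h1 : (1 : K) ∈ ((I : FractionalIdeal (nonZeroDivisors R) K) : Submodule R K) *
        (((I : FractionalIdeal (nonZeroDivisors R) K)⁻¹ : FractionalIdeal (nonZeroDivisors R) K) : Submodule R K) := by
      rw [← FractionalIdeal.coe_mul, hmul, FractionalIdeal.coe_one]
      exact Submodule.one_le.mp le_rfl
    have key : ∀ y ∈ ((I : FractionalIdeal (nonZeroDivisors R) K) : Submodule R K) *
        (((I : FractionalIdeal (nonZeroDivisors R) K)⁻¹ : FractionalIdeal (nonZeroDivisors R) K) : Submodule R K),
        ∃ (r : R) (c : K), algebraMap R K r = y ∧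
          ∀ (x : R) (hx : x ∈ I), O.mkQ (x • c) = r • f ⟨x, hx⟩ := by
    -- the motive is additive and holds on products, so `Submodule.mul_induction_on` applies
      intro y hy
      refine Submodule.mul_induction_on hy ?_ ?_
      · intro a ha b hb
        rw [FractionalIdeal.mem_coe] at ha hb
        obtain ⟨a₀, ha₀, rfl⟩ := (FractionalIdeal.mem_coeIdeal _).mp ha
        have hbmul : ∀ (x : R), x ∈ I → ∃ t : R, algebraMap R K t = b * algebraMap R K x := by
          intro x hx
          have hxJ : algebraMap R K x ∈ (I : FractionalIdeal (nonZeroDivisors R) K) :=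
            FractionalIdeal.mem_coeIdeal_of_mem _ hx
          have hmem1 := (FractionalIdeal.mem_inv_iff hJ).mp hb _ hxJ
          obtain ⟨t, ht⟩ := (FractionalIdeal.mem_one_iff _).mp hmem1
          exact ⟨t, ht⟩
        choose t ht using hbmul
        obtain ⟨d, hd⟩ := Submodule.mkQ_surjective O (f ⟨a₀, ha₀⟩)
        refine ⟨t a₀ ha₀, b * d, ?_, ?_⟩
        · rw [ht a₀ ha₀]; ring
        · intro x hx
          have e1 : x • (b * d) = t x hx • d := by
            rw [Algebra.smul_def, Algebra.smul_def, ht x hx]; ring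
          rw [e1, map_smul, hd, ← map_smul, ← map_smul]
          congr 1
          apply Subtype.ext
          have eval : ∀ (u v : R) (hv : v ∈ I), ((u • (⟨v, hv⟩ : ↥I) : ↥I) : R) = u * v :=
            fun u v hv => rfl
          rw [eval, eval]
          apply IsFractionRing.injective R K
          rw [map_mul, map_mul, ht x hx, ht a₀ ha₀]
          ring
      · rintro y₁ y₂ ⟨r₁, c₁, hr₁, H₁⟩ ⟨r₂, c₂, hr₂, H₂⟩
        refine ⟨r₁ + r₂, c₁ + c₂, by rw [map_add, hr₁, hr₂], fun x hx => ?_⟩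
        rw [smul_add, map_add, H₁ x hx, H₂ x hx, ← add_smul]
    obtain ⟨r, c, hr, H⟩ := key 1 h1
    have hr1 : r = 1 := by
      apply IsFractionRing.injective R K
      rw [hr, map_one]
    refine ⟨O.mkQ.comp (LinearMap.toSpanSingleton R K c), fun x hx => ?_⟩
    have hx' := H x hx
    rw [hr1, one_smul] at hx'
    simpa [LinearMap.toSpanSingleton_apply] using hx'

/-- `L` is a finite extension of `ℚ_p` with ring of integers `o_L := integralClosure ℤ_[p] L`,
and `Q ≅ L/o_L` is the discrete quotient `o_L`-module.  `M₀ →^α M →^β M₁` is a sequence of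
Hausdorff locally compact linear-topological `o_L`-modules with continuous `o_L`-linear maps
such that `im(α) = ker(β)` and `β` is topologically strict (images of open sets are
relatively open in the range) with closed image.  For a topological `o_L`-module `N`,
`N^∨ := Hom_{o_L}^c(N, L/o_L)` is formalised as `continuousLinearSubmodule o_L N Q`.

Conclusion: the dual sequence `M₁^∨ →^{β^∨} M^∨ →^{α^∨} M₀^∨` (with `β^∨ F = F ∘ β` and
`α^∨ F = F ∘ α`) is exact, i.e. `im(β^∨) = ker(α^∨)`: a functional `F ∈ M^∨` vanishes on the
image of `α` if and only if it factors as `F = G ∘ β` for some `G ∈ M₁^∨`. -/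
theorem statement19_dual_sequence_exact
    (p : ℕ) [Fact p.Prime] (L : Type*) [Field L] [Algebra ℚ_[p] L]
    [FiniteDimensional ℚ_[p] L] [Algebra ℤ_[p] L] [IsScalarTower ℤ_[p] ℚ_[p] L]
    (Q : Type*) [AddCommGroup Q] [Module ↥(integralClosure ℤ_[p] L) Q]
    [TopologicalSpace Q] [DiscreteTopology Q] [IsTopologicalAddGroup Q]
    [ContinuousConstSMul ↥(integralClosure ℤ_[p] L) Q]
    (eQ : Q ≃ₗ[↥(integralClosure ℤ_[p] L)]
      (L ⧸ (LinearMap.range (Algebra.linearMap ↥(integralClosure ℤ_[p] L) L))))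
    (M₀ M M₁ : Type*)
    [TopologicalSpace M₀] [AddCommGroup M₀] [Module ↥(integralClosure ℤ_[p] L) M₀]
    [IsTopologicalAddGroup M₀] [T2Space M₀] [LocallyCompactSpace M₀]
    (hlin₀ : ∀ U ∈ nhds (0 : M₀), ∃ S : Submodule ↥(integralClosure ℤ_[p] L) M₀,
      IsOpen (S : Set M₀) ∧ (S : Set M₀) ⊆ U)
    [TopologicalSpace M] [AddCommGroup M] [Module ↥(integralClosure ℤ_[p] L) M]
    [IsTopologicalAddGroup M] [T2Space M] [LocallyCompactSpace M]
    (hlin : ∀ U ∈ nhds (0 : M), ∃ S : Submodule ↥(integralClosure ℤ_[p] L) M,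
      IsOpen (S : Set M) ∧ (S : Set M) ⊆ U)
    [TopologicalSpace M₁] [AddCommGroup M₁] [Module ↥(integralClosure ℤ_[p] L) M₁]
    [IsTopologicalAddGroup M₁] [T2Space M₁] [LocallyCompactSpace M₁]
    (hlin₁ : ∀ U ∈ nhds (0 : M₁), ∃ S : Submodule ↥(integralClosure ℤ_[p] L) M₁,
      IsOpen (S : Set M₁) ∧ (S : Set M₁) ⊆ U)
    (α : M₀ →ₗ[↥(integralClosure ℤ_[p] L)] M) (hα : Continuous α)
    (β : M →ₗ[↥(integralClosure ℤ_[p] L)] M₁) (hβ : Continuous β)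
    (hexact : Set.range α = {m : M | β m = 0})
    (hclosed : IsClosed (Set.range β))
    (hstrict : ∀ U : Set M, IsOpen U →
      ∃ V : Set M₁, IsOpen V ∧ β '' U = V ∩ Set.range β) :
    ∀ F : ↥(continuousLinearSubmodule ↥(integralClosure ℤ_[p] L) M Q),
      (∀ m₀ : M₀, F.1 (α m₀) = 0) ↔
        ∃ G : ↥(continuousLinearSubmodule ↥(integralClosure ℤ_[p] L) M₁ Q),
          ∀ m : M, F.1 m = G.1 (β m) := by
  classical
  haveI hFR : IsFractionRing ↥(integralClosure ℤ_[p] L) L :=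
    integralClosure.isFractionRing_of_finite_extension ℚ_[p] L
  haveI hDD : IsDedekindDomain ↥(integralClosure ℤ_[p] L) :=
    integralClosure.isDedekindDomain ℤ_[p] ℚ_[p] L
  intro F
  constructor
  · intro hF
    have hFlin : IsLinearMap (↥(integralClosure ℤ_[p] L)) ⇑F.1 := F.2
    set F' : M →ₗ[↥(integralClosure ℤ_[p] L)] Q := IsLinearMap.mk' ⇑F.1 hFlin with hF'def
    -- `U := F⁻¹(0)` is open; get `V` from strictness and an open submodule `S ⊆ V`
    have hU : IsOpen (⇑F.1 ⁻¹' {0}) := (isOpen_discrete _).preimage F.1.continuous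
    obtain ⟨V, hVopen, hVeq⟩ := hstrict _ hU
    have h0V : (0 : M₁) ∈ V := by
      have h0U : (0 : M) ∈ ⇑F.1 ⁻¹' {0} := by
        simp only [Set.mem_preimage, Set.mem_singleton_iff]
        exact hFlin.map_zero
      have h0 : (0 : M₁) ∈ ⇑β '' (⇑F.1 ⁻¹' {0}) := ⟨0, h0U, map_zero β⟩
      rw [hVeq] at h0
      exact h0.1
    obtain ⟨S, hSopen, hSsub⟩ := hlin₁ V (hVopen.mem_nhds h0V)
    -- the induced map `g₀` on the range of `β`
    have hker₀ : LinearMap.ker β.rangeRestrict ≤ LinearMap.ker F' := by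
      rw [LinearMap.ker_rangeRestrict]
      intro m hm
      rw [LinearMap.mem_ker] at hm ⊢
      have hmem : m ∈ Set.range ⇑α := by rw [hexact]; exact hm
      obtain ⟨m₀, rfl⟩ := hmem
      exact hF m₀
    obtain ⟨g₀, hg₀⟩ :=
      auxFactorThroughSurjective β.rangeRestrict (LinearMap.surjective_rangeRestrict β) F' hker₀
    have hg₀' : ∀ (n : M₁) (hn : n ∈ LinearMap.range β) (m : M), β m = n →
        g₀ ⟨n, hn⟩ = F.1 m := by
      intro n hn m hm
      have e : (⟨n, hn⟩ : ↥(LinearMap.range β)) = β.rangeRestrict m := by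
        apply Subtype.ext
        simp [hm]
      rw [e, hg₀]
      rfl
    have hg₀S : ∀ (n : M₁) (hnS : n ∈ S) (hn : n ∈ LinearMap.range β), g₀ ⟨n, hn⟩ = 0 := by
      intro n hnS hn
      obtain ⟨m, hm⟩ := LinearMap.mem_range.mp hn
      have himg : n ∈ ⇑β '' (⇑F.1 ⁻¹' {0}) := by
        rw [hVeq]
        exact ⟨hSsub hnS, ⟨m, hm⟩⟩
      obtain ⟨u, hu, hun⟩ := himg
      rw [hg₀' n hn u hun]
      exact hu
    -- glue `g₀` with `0` on `S` to a map `g₁` on `N' := range β ⊔ S`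
    set N' : Submodule (↥(integralClosure ℤ_[p] L)) M₁ := LinearMap.range β ⊔ S with hN'
    set ψ : (↥(LinearMap.range β) × ↥S) →ₗ[↥(integralClosure ℤ_[p] L)] M₁ :=
      (LinearMap.range β).subtype.coprod S.subtype with hψdef
    have hψmem : ∀ z, ψ z ∈ N' := by
      rintro ⟨a, b⟩
      exact Submodule.add_mem_sup a.2 b.2
    set ψ' := ψ.codRestrict N' hψmem with hψ'def
    have hψsurj : Function.Surjective ψ' := by
      rintro ⟨x, hx⟩
      obtain ⟨y, hy, z, hz, hyz⟩ := Submodule.mem_sup.mp hx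
      refine ⟨(⟨y, hy⟩, ⟨z, hz⟩), ?_⟩
      apply Subtype.ext
      simpa [hψ'def, hψdef] using hyz
    set φ : (↥(LinearMap.range β) × ↥S) →ₗ[↥(integralClosure ℤ_[p] L)] Q :=
      g₀.comp (LinearMap.fst _ _ _) with hφdef
    have hkerψ : LinearMap.ker ψ' ≤ LinearMap.ker φ := by
      rintro ⟨⟨n, hn⟩, ⟨s, hs⟩⟩ hz
      rw [LinearMap.mem_ker] at hz ⊢
      have hsum : n + s = 0 := by
        have := congrArg Subtype.val hz
        simpa [hψ'def, hψdef] using this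
      have hnS : n ∈ S := by
        have hns : n = -s := eq_neg_of_add_eq_zero_left hsum
        rw [hns]
        exact S.neg_mem hs
      simpa [hφdef] using hg₀S n hnS hn
    obtain ⟨g₁, hg₁⟩ := auxFactorThroughSurjective ψ' hψsurj φ hkerψ
    -- Baer criterion to extend `g₁` from `N'` to all of `M₁`
    have hBQ : Module.Baer (↥(integralClosure ℤ_[p] L)) Q := by
      intro I f
      obtain ⟨g', hg'⟩ := auxBaerQuotient (R := ↥(integralClosure ℤ_[p] L)) (K := L) I
        (eQ.toLinearMap ∘ₗ f)
      refine ⟨eQ.symm.toLinearMap ∘ₗ g', fun x mem => ?_⟩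
      have hx := hg' x mem
      simp only [LinearMap.comp_apply, LinearEquiv.coe_coe] at hx ⊢
      rw [hx, LinearEquiv.symm_apply_apply]
    obtain ⟨h, hcomp⟩ := hBQ.extension_property N'.subtype (Submodule.injective_subtype N') g₁
    have hcomp' : ∀ z : ↥N', h z.1 = g₁ z := by
      intro z
      have := LinearMap.congr_fun hcomp z
      simpa using this
    -- `h` vanishes on the open submodule `S`, hence is continuous
    have hS0 : ∀ s ∈ S, h s = 0 := by
      intro s hs
      have hsN : s ∈ N' := Submodule.mem_sup_right hs
      have e1 : (⟨s, hsN⟩ : ↥N') = ψ' (0, ⟨s, hs⟩) := by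
        apply Subtype.ext
        simp [hψ'def, hψdef]
      calc h s = g₁ ⟨s, hsN⟩ := hcomp' ⟨s, hsN⟩
        _ = g₁ (ψ' (0, ⟨s, hs⟩)) := by rw [e1]
        _ = φ (0, ⟨s, hs⟩) := hg₁ _
        _ = 0 := by simp [hφdef]
    have hlocal : ∀ x y : M₁, y - x ∈ S → h y = h x := by
      intro x y hy
      have h0 : h (y - x) = 0 := hS0 _ hy
      rw [map_sub] at h0
      exact sub_eq_zero.mp h0
    have hcont : Continuous h := by
      rw [continuous_discrete_rng]
      intro q
      rw [isOpen_iff_mem_nhds]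
      intro x hx
      have hxmem : x ∈ (fun y : M₁ => y - x) ⁻¹' (S : Set M₁) := by
        simp only [Set.mem_preimage, sub_self, SetLike.mem_coe]
        exact S.zero_mem
      have hopen : IsOpen ((fun y : M₁ => y - x) ⁻¹' (S : Set M₁)) :=
        hSopen.preimage (continuous_sub_right x)
      filter_upwards [hopen.mem_nhds hxmem] with y hy
      have hyx : h y = h x := hlocal x y hy
      simpa [hyx] using hx
    have hGlin : IsLinearMap (↥(integralClosure ℤ_[p] L)) ⇑(ContinuousMap.mk ⇑h hcont) :=
      ⟨h.map_add, h.map_smul⟩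
    refine ⟨⟨ContinuousMap.mk ⇑h hcont, hGlin⟩, ?_⟩
    intro m
    have hmr : β m ∈ LinearMap.range β := LinearMap.mem_range_self β m
    have hmN : β m ∈ N' := Submodule.mem_sup_left hmr
    have e1 : (⟨β m, hmN⟩ : ↥N') = ψ' (⟨β m, hmr⟩, 0) := by
      apply Subtype.ext
      simp [hψ'def, hψdef]
    show F.1 m = h (β m)
    calc F.1 m = g₀ ⟨β m, hmr⟩ := (hg₀' (β m) hmr m rfl).symm
      _ = φ (⟨β m, hmr⟩, 0) := by simp [hφdef]
      _ = g₁ (ψ' (⟨β m, hmr⟩, 0)) := (hg₁ _).symm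
      _ = g₁ ⟨β m, hmN⟩ := by rw [e1]
      _ = h (β m) := (hcomp' ⟨β m, hmN⟩).symm
  · rintro ⟨G, hG⟩ m₀
    have hGlin : IsLinearMap (↥(integralClosure ℤ_[p] L)) ⇑G.1 := G.2
    have h1 : β (α m₀) = 0 := by
      have hmem : α m₀ ∈ Set.range ⇑α := Set.mem_range_self m₀
      rw [hexact] at hmem
      exact hmem
    rw [hG (α m₀), h1]
    exact hGlin.map_zero
end
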